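/- Let R be a nonzero ring, G = ℤ × ℤ, and M a free RG-module with basis B. In the semidirect product M ⋊ G, generated by B ∪ {x, y} with x = (0,(1,0)) and y = (0,(0,1)), let F ⊆ M be a finite set of nonzero elements and let L be the rational subset {x^{±1},y^{±1}}* [(x ∪ Fx)* y (x⁻¹)*]* {x^{±1},y^{±1}}* (where elements f ∈ F stand for (f,0) ∈ M ⋊ G). Then for m ∈ M, the element (m,(0,0)) belongs to L if and only if m is a subset sum of F (i.e., m = Σᵢ gᵢ·fᵢ with the gᵢ ∈ G pairwise distinct and fᵢ ∈ F). -/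

import Mathlib

/-- Semidirect product `M ⋊ G` of a `G`-semimodule `M` (commutative monoid with
`G`-action by automorphisms) with the group `G`; multiplication is
`(m,g)(m',g') = (m + g • m', g * g')`. -/
abbrev Sd (M G : Type*) := M × G

instance Sd.monoid (M G : Type*) [AddCommMonoid M] [Group G] [DistribMulAction G M] :
    Monoid (Sd M G) where
  mul p q := (p.1 + p.2 • q.1, p.2 * q.2)
  one := ((0 : M), (1 : G))
  mul_assoc p q r := by
    show ((p.1 + p.2 • q.1) + (p.2 * q.2) • r.1, (p.2 * q.2) * r.2) =
      (p.1 + p.2 • (q.1 + q.2 • r.1), p.2 * (q.2 * r.2))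
    rw [smul_add, mul_smul, add_assoc, mul_assoc]
  one_mul p := by
    show ((0 : M) + (1 : G) • p.1, 1 * p.2) = p
    simp
  mul_one p := by
    show (p.1 + p.2 • (0 : M), p.2 * 1) = p
    simp

instance Sd.group (M G : Type*) [AddCommGroup M] [Group G] [DistribMulAction G M] :
    Group (Sd M G) :=
  { Sd.monoid M G with
    inv := fun p => (-(p.2⁻¹ • p.1), p.2⁻¹)
    inv_mul_cancel := fun p => by
      show (-(p.2⁻¹ • p.1) + p.2⁻¹ • p.1, p.2⁻¹ * p.2) = ((0 : M), (1 : G))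
      simp }

open scoped Pointwise

open Multiplicative

namespace Stmt16Aux

abbrev G2 := Multiplicative (ℤ × ℤ)

variable {M : Type*} [AddCommGroup M] [DistribMulAction G2 M]

lemma mul_def (p q : Sd M G2) : p * q = (p.1 + p.2 • q.1, p.2 * q.2) := rfl

lemma one_def : (1 : Sd M G2) = ((0 : M), (1 : G2)) := rfl

/-- embedding of G2 -/
def φ : G2 →* Sd M G2 where
  toFun g := ((0 : M), g)
  map_one' := rfl
  map_mul' a b := by
    show ((0:M), a*b) = ((0:M) + a • (0:M), a*b)
    simp

lemma inv_phi (g : G2) : (φ g : Sd M G2)⁻¹ = φ g⁻¹ := by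
  show (-(g⁻¹ • (0:M)), g⁻¹) = ((0:M), g⁻¹)
  simp

lemma ofAdd_pair (a b : ℤ) : ofAdd ((a, b) : ℤ × ℤ) = ofAdd (a,(0:ℤ)) * ofAdd ((0:ℤ),b) := by
  simp [← ofAdd_add, Prod.ext_iff]

lemma gen_mem (g : G2) :
    ((0 : M), g) ∈ Submonoid.closure
      ({((0:M), ofAdd ((1:ℤ),(0:ℤ))), ((0:M), ofAdd ((1:ℤ),(0:ℤ)))⁻¹,
        ((0:M), ofAdd ((0:ℤ),(1:ℤ))), ((0:M), ofAdd ((0:ℤ),(1:ℤ)))⁻¹} : Set (Sd M G2)) := by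
  set x : Sd M G2 := ((0:M), ofAdd ((1:ℤ),(0:ℤ)))
  set y : Sd M G2 := ((0:M), ofAdd ((0:ℤ),(1:ℤ)))
  have key : ∀ a : ℤ, ∀ z : Sd M G2, z ∈ ({x, x⁻¹, y, y⁻¹} : Set (Sd M G2)) →
      z⁻¹ ∈ ({x, x⁻¹, y, y⁻¹} : Set (Sd M G2)) →
      z ^ a ∈ Submonoid.closure ({x, x⁻¹, y, y⁻¹} : Set (Sd M G2)) := by
    intro a z hz hzi
    rcases le_or_gt 0 a with ha | ha
    · lift a to ℕ using ha
      rw [zpow_natCast]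
      exact pow_mem (Submonoid.subset_closure hz) a
    · obtain ⟨n, rfl⟩ : ∃ n : ℕ, a = -(n:ℤ) := ⟨(-a).toNat, by omega⟩
      rw [zpow_neg, ← inv_zpow, zpow_natCast]
      exact pow_mem (Submonoid.subset_closure hzi) n
  have hx : (x : Sd M G2) = φ (ofAdd ((1:ℤ),(0:ℤ))) := rfl
  have hy : (y : Sd M G2) = φ (ofAdd ((0:ℤ),(1:ℤ))) := rfl
  have hg : ((0:M), g) = x ^ (toAdd g).1 * y ^ (toAdd g).2 := by
    rw [hx, hy, ← map_zpow (φ (M := M)), ← map_zpow (φ (M := M)), ← map_mul (φ (M := M))]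
    show ((0:M), g) = ((0:M), _)
    congr 1
    apply Multiplicative.toAdd.injective
    simp [Prod.ext_iff]
  rw [hg]
  exact mul_mem (key _ x (by simp) (by simp)) (key _ y (by simp) (by simp))

end Stmt16Aux
namespace Stmt16Aux

variable {M : Type*} [AddCommGroup M] [DistribMulAction G2 M]

lemma A_struct (F : Finset M) (p : Sd M G2)
    (hp : p ∈ Submonoid.closure
      (({((0:M), ofAdd ((1:ℤ),(0:ℤ)))} : Set (Sd M G2)) ∪
        ((fun f => ((f, (1 : G2)) : Sd M G2) * ((0:M), ofAdd ((1:ℤ),(0:ℤ)))) '' (F : Set M)))) :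
    ∃ (k : ℕ) (s : Finset G2) (f : G2 → M),
      p.2 = ofAdd ((k:ℤ), (0:ℤ)) ∧ (∀ g ∈ s, f g ∈ F) ∧
      (∀ g ∈ s, 0 ≤ (toAdd g).1 ∧ (toAdd g).1 < (k:ℤ) ∧ (toAdd g).2 = 0) ∧
      p.1 = ∑ g ∈ s, g • f g := by
  classical
  induction hp using Submonoid.closure_induction with
  | one =>
    refine ⟨0, ∅, fun _ => 0, ?_, by simp, by simp, by simp [one_def]⟩
    show (1 : G2) = ofAdd ((0:ℤ),(0:ℤ)); rfl
  | mem z hz =>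
    rcases hz with hz | ⟨f, hf, rfl⟩
    · rcases hz with rfl
      exact ⟨1, ∅, fun _ => 0, rfl, by simp, by simp, by simp⟩
    · refine ⟨1, {(1 : G2)}, fun _ => f, ?_, by simpa using hf, ?_, ?_⟩
      · show (1:G2) * ofAdd ((1:ℤ),(0:ℤ)) = ofAdd ((1:ℤ),(0:ℤ)); rw [one_mul]
      · intro g hg; rw [Finset.mem_singleton] at hg; subst hg
        refine ⟨le_refl 0, by norm_num, rfl⟩
      · show f + (1:G2) • (0:M) = ∑ g ∈ {(1:G2)}, g • f
        simp
  | mul p q hp hq ihp ihq =>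
    obtain ⟨k, s, f, h2, hmemF, hb, h1⟩ := ihp
    obtain ⟨k', s', f', h2', hmemF', hb', h1'⟩ := ihq
    have hinj : ∀ a ∈ s', ∀ b ∈ s', p.2 * a = p.2 * b → a = b := fun a _ b _ h =>
      mul_left_cancel h
    have himg : ∀ h ∈ s'.image (fun g => p.2 * g), (k:ℤ) ≤ (toAdd h).1 ∧
        (toAdd h).1 < (k:ℤ) + k' ∧ (toAdd h).2 = 0 := by
      intro h hh
      rw [Finset.mem_image] at hh
      obtain ⟨g, hg, rfl⟩ := hh
      obtain ⟨hg1, hg2, hg3⟩ := hb' g hg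
      have : toAdd (p.2 * g) = toAdd p.2 + toAdd g := rfl
      rw [this, h2]
      constructor
      · show (k:ℤ) ≤ (k:ℤ) + (toAdd g).1; omega
      constructor
      · show (k:ℤ) + (toAdd g).1 < (k:ℤ) + k'; omega
      · show (0:ℤ) + (toAdd g).2 = 0; omega
    have hdisj : Disjoint s (s'.image (fun g => p.2 * g)) := by
      rw [Finset.disjoint_left]
      intro a ha hA
      have h1 := (hb a ha).2.1
      have h2 := (himg a hA).1
      omega
    refine ⟨k + k', s ∪ s'.image (fun g => p.2 * g),
      fun g => if g ∈ s then f g else f' (p.2⁻¹ * g), ?_, ?_, ?_, ?_⟩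
    · show p.2 * q.2 = _
      rw [h2, h2', ← ofAdd_add]
      congr 1
      try simp [Prod.ext_iff]
    · intro g hg
      rw [Finset.mem_union] at hg
      rcases hg with hg | hg
      · beta_reduce; rw [if_pos hg]; exact hmemF g hg
      · have hns := Finset.disjoint_right.1 hdisj hg
        beta_reduce; rw [if_neg hns]
        rw [Finset.mem_image] at hg
        obtain ⟨g', hg', rfl⟩ := hg
        rw [inv_mul_cancel_left]
        exact hmemF' g' hg'
    · intro g hg
      rw [Finset.mem_union] at hg
      rcases hg with hg | hg
      · obtain ⟨u, v, w⟩ := hb g hg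
        refine ⟨u, by push_cast; omega, w⟩
      · obtain ⟨u, v, w⟩ := himg g hg
        refine ⟨by omega, by push_cast; omega, w⟩
    · show p.1 + p.2 • q.1 = _
      rw [h1, h1', Finset.smul_sum, Finset.sum_union hdisj]
      congr 1
      · exact Finset.sum_congr rfl fun g hg => by beta_reduce; rw [if_pos hg]
      · rw [Finset.sum_image hinj]
        refine Finset.sum_congr rfl fun g hg => ?_
        beta_reduce
        rw [if_neg (Finset.disjoint_right.1 hdisj (Finset.mem_image_of_mem _ hg)),
          inv_mul_cancel_left, mul_smul]

end Stmt16Aux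
namespace Stmt16Aux

variable {M : Type*} [AddCommGroup M] [DistribMulAction G2 M]

lemma xinv_struct (p : Sd M G2)
    (hp : p ∈ Submonoid.closure ({((0:M), ofAdd ((1:ℤ),(0:ℤ)))⁻¹} : Set (Sd M G2))) :
    p.1 = 0 ∧ ∃ t : ℕ, p.2 = ofAdd (-(t:ℤ), (0:ℤ)) := by
  rw [Submonoid.mem_closure_singleton] at hp
  obtain ⟨n, rfl⟩ := hp
  have hx : (((0:M), ofAdd ((1:ℤ),(0:ℤ))) : Sd M G2)⁻¹ = (φ (ofAdd ((1:ℤ),(0:ℤ))))⁻¹ := rfl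
  rw [hx, inv_phi, ← map_pow]
  refine ⟨rfl, n, ?_⟩
  show (ofAdd ((1:ℤ),(0:ℤ)))⁻¹ ^ n = ofAdd (-(n:ℤ), (0:ℤ))
  apply Multiplicative.toAdd.injective
  simp [Prod.ext_iff]

lemma genclos_fst (p : Sd M G2)
    (hp : p ∈ Submonoid.closure
      ({((0:M), ofAdd ((1:ℤ),(0:ℤ))), ((0:M), ofAdd ((1:ℤ),(0:ℤ)))⁻¹,
        ((0:M), ofAdd ((0:ℤ),(1:ℤ))), ((0:M), ofAdd ((0:ℤ),(1:ℤ)))⁻¹} : Set (Sd M G2))) :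
    p.1 = 0 := by
  induction hp using Submonoid.closure_induction with
  | one => rfl
  | mem z hz =>
    rcases hz with rfl | rfl | rfl | rfl
    · rfl
    · show -((ofAdd ((1:ℤ),(0:ℤ)))⁻¹ • (0:M)) = 0; simp
    · rfl
    · show -((ofAdd ((0:ℤ),(1:ℤ)))⁻¹ • (0:M)) = 0; simp
  | mul p q hp hq ih ih' =>
    show p.1 + p.2 • q.1 = 0
    rw [ih, ih', smul_zero, add_zero]

/-- structure of elements of the closure of `S = A * {y} * closure {x⁻¹}` -/
lemma clS_struct (F : Finset M) (p : Sd M G2)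
    (hp : p ∈ Submonoid.closure
      ((Submonoid.closure (({((0:M), ofAdd ((1:ℤ),(0:ℤ)))} : Set (Sd M G2)) ∪
          ((fun f => ((f, (1 : G2)) : Sd M G2) * ((0:M), ofAdd ((1:ℤ),(0:ℤ)))) '' (F : Set M))) :
            Set (Sd M G2)) *
        ({((0:M), ofAdd ((0:ℤ),(1:ℤ)))} : Set (Sd M G2)) *
        (Submonoid.closure ({((0:M), ofAdd ((1:ℤ),(0:ℤ)))⁻¹} : Set (Sd M G2)) : Set (Sd M G2)))) :
    ∃ (n : ℕ) (a : ℤ) (s : Finset G2) (f : G2 → M),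
      p.2 = ofAdd (a, (n:ℤ)) ∧ (∀ g ∈ s, f g ∈ F) ∧
      (∀ g ∈ s, 0 ≤ (toAdd g).2 ∧ (toAdd g).2 < (n:ℤ)) ∧
      p.1 = ∑ g ∈ s, g • f g := by
  classical
  induction hp using Submonoid.closure_induction with
  | one =>
    refine ⟨0, 0, ∅, fun _ => 0, ?_, by simp, by simp, by simp [one_def]⟩
    show (1 : G2) = ofAdd ((0:ℤ),(0:ℤ)); rfl
  | mem z hz =>
    rw [Set.mem_mul] at hz
    obtain ⟨u, hu, v, hv, rfl⟩ := hz
    rw [Set.mem_mul] at hu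
    obtain ⟨w, hw, yel, hy, rfl⟩ := hu
    rw [Set.mem_singleton_iff] at hy
    subst hy
    obtain ⟨k, s, f, h2, hmemF, hb, h1⟩ := A_struct F w hw
    obtain ⟨hv1, t, hv2⟩ := xinv_struct v hv
    refine ⟨1, (k:ℤ) - t, s, f, ?_, hmemF, ?_, ?_⟩
    · show w.2 * ofAdd ((0:ℤ),(1:ℤ)) * v.2 = _
      rw [h2, hv2, ← ofAdd_add, ← ofAdd_add]
      congr 1
      try simp [Prod.ext_iff]
      try ring
    · intro g hg
      have := (hb g hg).2.2
      rw [this]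
      norm_num
    · show (w.1 + w.2 • (0:M)) + (w.2 * ofAdd ((0:ℤ),(1:ℤ))) • v.1 = _
      rw [hv1, smul_zero, smul_zero, add_zero, add_zero, h1]
  | mul p q hp hq ihp ihq =>
    obtain ⟨n, a, s, f, h2, hmemF, hb, h1⟩ := ihp
    obtain ⟨n', a', s', f', h2', hmemF', hb', h1'⟩ := ihq
    have hinj : ∀ x ∈ s', ∀ y ∈ s', p.2 * x = p.2 * y → x = y := fun x _ y _ h =>
      mul_left_cancel h
    have himg : ∀ h ∈ s'.image (fun g => p.2 * g), (n:ℤ) ≤ (toAdd h).2 ∧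
        (toAdd h).2 < (n:ℤ) + n' := by
      intro h hh
      rw [Finset.mem_image] at hh
      obtain ⟨g, hg, rfl⟩ := hh
      obtain ⟨hg1, hg2⟩ := hb' g hg
      have ht : toAdd (p.2 * g) = toAdd p.2 + toAdd g := rfl
      rw [ht, h2]
      constructor
      · show (n:ℤ) ≤ (n:ℤ) + (toAdd g).2; omega
      · show (n:ℤ) + (toAdd g).2 < (n:ℤ) + n'; omega
    have hdisj : Disjoint s (s'.image (fun g => p.2 * g)) := by
      rw [Finset.disjoint_left]
      intro x hx hX
      have u1 := (hb x hx).2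
      have u2 := (himg x hX).1
      omega
    refine ⟨n + n', a + a', s ∪ s'.image (fun g => p.2 * g),
      fun g => if g ∈ s then f g else f' (p.2⁻¹ * g), ?_, ?_, ?_, ?_⟩
    · show p.2 * q.2 = _
      rw [h2, h2', ← ofAdd_add]
      congr 1
      try simp [Prod.ext_iff]
    · intro g hg
      rw [Finset.mem_union] at hg
      rcases hg with hg | hg
      · beta_reduce; rw [if_pos hg]; exact hmemF g hg
      · have hns := Finset.disjoint_right.1 hdisj hg
        beta_reduce; rw [if_neg hns]
        rw [Finset.mem_image] at hg
        obtain ⟨g', hg', rfl⟩ := hg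
        rw [inv_mul_cancel_left]
        exact hmemF' g' hg'
    · intro g hg
      rw [Finset.mem_union] at hg
      rcases hg with hg | hg
      · obtain ⟨u, v⟩ := hb g hg
        refine ⟨u, by push_cast; omega⟩
      · obtain ⟨u, v⟩ := himg g hg
        refine ⟨by omega, by push_cast; omega⟩
    · show p.1 + p.2 • q.1 = _
      rw [h1, h1', Finset.smul_sum, Finset.sum_union hdisj]
      congr 1
      · exact Finset.sum_congr rfl fun g hg => by beta_reduce; rw [if_pos hg]
      · rw [Finset.sum_image hinj]
        refine Finset.sum_congr rfl fun g hg => ?_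
        beta_reduce
        rw [if_neg (Finset.disjoint_right.1 hdisj (Finset.mem_image_of_mem _ hg)),
          inv_mul_cancel_left, mul_smul]

end Stmt16Aux
namespace Stmt16Aux

variable {M : Type*} [AddCommGroup M] [DistribMulAction G2 M]

lemma L_forward (F : Finset M) (m : M)
    (hm : ((m, (1:G2)) : Sd M G2) ∈
      (Submonoid.closure
        ({((0:M), ofAdd ((1:ℤ),(0:ℤ))), ((0:M), ofAdd ((1:ℤ),(0:ℤ)))⁻¹,
          ((0:M), ofAdd ((0:ℤ),(1:ℤ))), ((0:M), ofAdd ((0:ℤ),(1:ℤ)))⁻¹} : Set (Sd M G2)) :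
          Set (Sd M G2)) *
      (Submonoid.closure
        ((Submonoid.closure (({((0:M), ofAdd ((1:ℤ),(0:ℤ)))} : Set (Sd M G2)) ∪
            ((fun f => ((f, (1 : G2)) : Sd M G2) * ((0:M), ofAdd ((1:ℤ),(0:ℤ)))) '' (F : Set M))) :
              Set (Sd M G2)) *
          ({((0:M), ofAdd ((0:ℤ),(1:ℤ)))} : Set (Sd M G2)) *
          (Submonoid.closure ({((0:M), ofAdd ((1:ℤ),(0:ℤ)))⁻¹} : Set (Sd M G2)) :
            Set (Sd M G2))) : Set (Sd M G2)) *
      (Submonoid.closure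
        ({((0:M), ofAdd ((1:ℤ),(0:ℤ))), ((0:M), ofAdd ((1:ℤ),(0:ℤ)))⁻¹,
          ((0:M), ofAdd ((0:ℤ),(1:ℤ))), ((0:M), ofAdd ((0:ℤ),(1:ℤ)))⁻¹} : Set (Sd M G2)) :
          Set (Sd M G2))) :
    ∃ (s : Finset G2) (f : G2 → M), (∀ g ∈ s, f g ∈ F) ∧ m = ∑ g ∈ s, g • f g := by
  classical
  rw [Set.mem_mul] at hm
  obtain ⟨u, hu, r, hr, hur⟩ := hm
  rw [Set.mem_mul] at hu
  obtain ⟨l, hl, c, hc, rfl⟩ := hu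
  have hl1 : l.1 = 0 := genclos_fst l hl
  have hr1 : r.1 = 0 := genclos_fst r hr
  obtain ⟨n, a, s, f, h2, hmemF, hb, h1⟩ := clS_struct F c hc
  have hm1 : m = l.2 • c.1 := by
    have hfst : ((l * c) * r).1 = m := by rw [hur]
    rw [← hfst]
    show (l.1 + l.2 • c.1) + _ • r.1 = _
    rw [hl1, hr1, smul_zero, add_zero, zero_add]
  have hinj : ∀ x ∈ s, ∀ y ∈ s, l.2 * x = l.2 * y → x = y := fun x _ y _ h =>
    mul_left_cancel h
  refine ⟨s.image (fun g => l.2 * g), fun h => f (l.2⁻¹ * h), ?_, ?_⟩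
  · intro g hg
    rw [Finset.mem_image] at hg
    obtain ⟨g', hg', rfl⟩ := hg
    beta_reduce
    rw [inv_mul_cancel_left]
    exact hmemF g' hg'
  · rw [hm1, h1, Finset.smul_sum, Finset.sum_image hinj]
    refine Finset.sum_congr rfl fun g hg => ?_
    beta_reduce
    rw [inv_mul_cancel_left, mul_smul]

lemma finset_to_fin (F : Finset M) (s : Finset G2) (f : G2 → M) (hf : ∀ g ∈ s, f g ∈ F) :
    ∃ (n : ℕ) (g : Fin n → G2), Function.Injective g ∧
      ∃ f' : Fin n → M, (∀ i, f' i ∈ F) ∧ ∑ i, g i • f' i = ∑ g ∈ s, g • f g := by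
  classical
  refine ⟨s.card, fun i => (s.equivFin.symm i : G2), ?_, fun i => f (s.equivFin.symm i : G2),
    ?_, ?_⟩
  · intro i j h
    exact s.equivFin.symm.injective (Subtype.coe_injective h)
  · intro i
    exact hf _ (s.equivFin.symm i).2
  · rw [← Finset.sum_coe_sort s (fun g => g • f g)]
    exact Equiv.sum_comp s.equivFin.symm (fun a : s => (a : G2) • f a)

lemma fin_to_finset (F : Finset M) (n : ℕ) (g : Fin n → G2) (hg : Function.Injective g)
    (f : Fin n → M) (hf : ∀ i, f i ∈ F) :
    ∃ (s : Finset G2) (f' : G2 → M), (∀ h ∈ s, f' h ∈ F) ∧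
      ∑ h ∈ s, h • f' h = ∑ i, g i • f i := by
  classical
  refine ⟨Finset.univ.image g, fun h => if hh : ∃ i, g i = h then f hh.choose else 0, ?_, ?_⟩
  · intro h hh
    rw [Finset.mem_image] at hh
    obtain ⟨i, _, rfl⟩ := hh
    beta_reduce
    rw [dif_pos ⟨i, rfl⟩]
    exact hf _
  · rw [Finset.sum_image (fun x _ y _ h => hg h)]
    refine Finset.sum_congr rfl fun i _ => ?_
    beta_reduce
    rw [dif_pos ⟨i, rfl⟩]
    congr 1
    exact congrArg f (hg (⟨i, rfl⟩ : ∃ j, g j = g i).choose_spec)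

end Stmt16Aux
namespace Stmt16Aux

variable {M : Type*} [AddCommGroup M] [DistribMulAction G2 M]

lemma row_mem (F : Finset M) (k : ℕ) (f : ℕ → M) (hf : ∀ i, i < k → (f i = 0 ∨ f i ∈ F)) :
    ((∑ i ∈ Finset.range k, (ofAdd ((i:ℤ),(0:ℤ)) : G2) • f i, ofAdd ((k:ℤ),(0:ℤ))) : Sd M G2)
      ∈ Submonoid.closure (({((0:M), ofAdd ((1:ℤ),(0:ℤ)))} : Set (Sd M G2)) ∪
          ((fun f => ((f, (1 : G2)) : Sd M G2) * ((0:M), ofAdd ((1:ℤ),(0:ℤ)))) '' (F : Set M))) := by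
  induction k with
  | zero =>
    have : ((∑ i ∈ Finset.range 0, (ofAdd ((i:ℤ),(0:ℤ)) : G2) • f i,
        ofAdd (((0:ℕ):ℤ),(0:ℤ))) : Sd M G2) = 1 := by
      rw [one_def, Prod.mk.injEq]
      exact ⟨by simp, rfl⟩
    rw [this]
    exact one_mem _
  | succ k ih =>
    have hprev := ih (fun i hi => hf i (by omega))
    have hfac : ((f k, ofAdd ((1:ℤ),(0:ℤ))) : Sd M G2) ∈
        (({((0:M), ofAdd ((1:ℤ),(0:ℤ)))} : Set (Sd M G2)) ∪
          ((fun f => ((f, (1 : G2)) : Sd M G2) * ((0:M), ofAdd ((1:ℤ),(0:ℤ)))) '' (F : Set M))) := by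
      rcases hf k (by omega) with h0 | hF
      · left; rw [h0]; rfl
      · right
        refine ⟨f k, hF, ?_⟩
        show ((f k + (1:G2) • (0:M), (1:G2) * ofAdd ((1:ℤ),(0:ℤ))) : Sd M G2) = _
        rw [smul_zero, add_zero, one_mul]
    have hmul := mul_mem hprev (Submonoid.subset_closure hfac)
    have heq : ((∑ i ∈ Finset.range k, (ofAdd ((i:ℤ),(0:ℤ)) : G2) • f i,
          ofAdd ((k:ℤ),(0:ℤ))) : Sd M G2) * ((f k, ofAdd ((1:ℤ),(0:ℤ))) : Sd M G2) =
        ((∑ i ∈ Finset.range (k+1), (ofAdd ((i:ℤ),(0:ℤ)) : G2) • f i,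
          ofAdd (((k+1:ℕ):ℤ),(0:ℤ))) : Sd M G2) := by
      rw [mul_def, Prod.mk.injEq]
      refine ⟨?_, ?_⟩
      · rw [Finset.sum_range_succ]
      · rw [← ofAdd_add]
        congr 1
        try simp [Prod.ext_iff]
    rwa [heq] at hmul

lemma Srow_mem (F : Finset M) (k : ℕ) (f : ℕ → M) (hf : ∀ i, i < k → (f i = 0 ∨ f i ∈ F)) :
    ((∑ i ∈ Finset.range k, (ofAdd ((i:ℤ),(0:ℤ)) : G2) • f i, ofAdd ((0:ℤ),(1:ℤ))) : Sd M G2)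
      ∈ ((Submonoid.closure (({((0:M), ofAdd ((1:ℤ),(0:ℤ)))} : Set (Sd M G2)) ∪
            ((fun f => ((f, (1 : G2)) : Sd M G2) * ((0:M), ofAdd ((1:ℤ),(0:ℤ)))) '' (F : Set M))) :
              Set (Sd M G2)) *
          ({((0:M), ofAdd ((0:ℤ),(1:ℤ)))} : Set (Sd M G2)) *
          (Submonoid.closure ({((0:M), ofAdd ((1:ℤ),(0:ℤ)))⁻¹} : Set (Sd M G2)) :
            Set (Sd M G2))) := by
  have h1 := row_mem F k f hf
  have h2 : (((0:M), ofAdd ((1:ℤ),(0:ℤ))) : Sd M G2)⁻¹ ^ k ∈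
      Submonoid.closure ({((0:M), ofAdd ((1:ℤ),(0:ℤ)))⁻¹} : Set (Sd M G2)) :=
    pow_mem (Submonoid.subset_closure (Set.mem_singleton _)) k
  have hmem := Set.mul_mem_mul (Set.mul_mem_mul h1 (Set.mem_singleton (((0:M), ofAdd ((0:ℤ),(1:ℤ))) : Sd M G2))) h2
  have hinvpow : (((0:M), ofAdd ((1:ℤ),(0:ℤ))) : Sd M G2)⁻¹ ^ k =
      ((0:M), ofAdd (-(k:ℤ),(0:ℤ))) := by
    have : (((0:M), ofAdd ((1:ℤ),(0:ℤ))) : Sd M G2)⁻¹ ^ k =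
        φ ((ofAdd ((1:ℤ),(0:ℤ)))⁻¹ ^ k) := by
      rw [map_pow]
      congr 1
      rw [← inv_phi]
      rfl
    rw [this]
    show ((0:M), _) = ((0:M), _)
    congr 1
    apply Multiplicative.toAdd.injective
    simp [Prod.ext_iff]
  rw [hinvpow] at hmem
  have heq : ((∑ i ∈ Finset.range k, (ofAdd ((i:ℤ),(0:ℤ)) : G2) • f i,
        ofAdd ((k:ℤ),(0:ℤ))) : Sd M G2) * ((0:M), ofAdd ((0:ℤ),(1:ℤ))) *
        ((0:M), ofAdd (-(k:ℤ),(0:ℤ))) =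
      ((∑ i ∈ Finset.range k, (ofAdd ((i:ℤ),(0:ℤ)) : G2) • f i, ofAdd ((0:ℤ),(1:ℤ))) : Sd M G2) := by
    rw [mul_def, mul_def, Prod.mk.injEq]
    refine ⟨?_, ?_⟩
    · show (_ + _ • (0:M)) + _ • (0:M) = _
      rw [smul_zero, smul_zero, add_zero, add_zero]
    · show ofAdd ((k:ℤ),(0:ℤ)) * ofAdd ((0:ℤ),(1:ℤ)) * ofAdd (-(k:ℤ),(0:ℤ)) = _
      rw [← ofAdd_add, ← ofAdd_add]
      congr 1
      try simp [Prod.ext_iff]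
  rwa [heq] at hmem

lemma block_mem (F : Finset M) (n k : ℕ) (f : ℕ → ℕ → M)
    (hf : ∀ i j, i < k → j < n → (f i j = 0 ∨ f i j ∈ F)) :
    ((∑ j ∈ Finset.range n, ∑ i ∈ Finset.range k,
        (ofAdd ((i:ℤ),(j:ℤ)) : G2) • f i j, ofAdd ((0:ℤ),(n:ℤ))) : Sd M G2)
      ∈ Submonoid.closure
        ((Submonoid.closure (({((0:M), ofAdd ((1:ℤ),(0:ℤ)))} : Set (Sd M G2)) ∪
            ((fun f => ((f, (1 : G2)) : Sd M G2) * ((0:M), ofAdd ((1:ℤ),(0:ℤ)))) '' (F : Set M))) :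
              Set (Sd M G2)) *
          ({((0:M), ofAdd ((0:ℤ),(1:ℤ)))} : Set (Sd M G2)) *
          (Submonoid.closure ({((0:M), ofAdd ((1:ℤ),(0:ℤ)))⁻¹} : Set (Sd M G2)) :
            Set (Sd M G2))) := by
  induction n with
  | zero =>
    have : ((∑ j ∈ Finset.range 0, ∑ i ∈ Finset.range k,
        (ofAdd ((i:ℤ),(j:ℤ)) : G2) • f i j, ofAdd ((0:ℤ),((0:ℕ):ℤ))) : Sd M G2) = 1 := by
      rw [one_def, Prod.mk.injEq]; exact ⟨by simp, rfl⟩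
    rw [this]; exact one_mem _
  | succ n ih =>
    have hprev := ih (fun i j hi hj => hf i j hi (by omega))
    have hrow := Srow_mem F k (fun i => f i n) (fun i hi => hf i n hi (by omega))
    have hmul := mul_mem hprev (Submonoid.subset_closure hrow)
    have heq : ((∑ j ∈ Finset.range n, ∑ i ∈ Finset.range k,
          (ofAdd ((i:ℤ),(j:ℤ)) : G2) • f i j, ofAdd ((0:ℤ),(n:ℤ))) : Sd M G2) *
        ((∑ i ∈ Finset.range k, (ofAdd ((i:ℤ),(0:ℤ)) : G2) • f i n,
          ofAdd ((0:ℤ),(1:ℤ))) : Sd M G2) =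
        ((∑ j ∈ Finset.range (n+1), ∑ i ∈ Finset.range k,
          (ofAdd ((i:ℤ),(j:ℤ)) : G2) • f i j, ofAdd ((0:ℤ),((n+1:ℕ):ℤ))) : Sd M G2) := by
      rw [mul_def, Prod.mk.injEq]
      refine ⟨?_, ?_⟩
      · rw [Finset.sum_range_succ, Finset.smul_sum]
        congr 1
        refine Finset.sum_congr rfl fun i _ => ?_
        rw [← mul_smul, ← ofAdd_add]
        congr 2
        try simp [Prod.ext_iff]
      · rw [← ofAdd_add]
        congr 1
        try simp [Prod.ext_iff]
    rwa [heq] at hmul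

end Stmt16Aux
namespace Stmt16Aux

variable {M : Type*} [AddCommGroup M] [DistribMulAction G2 M]

lemma L_backward (F : Finset M) (s : Finset G2) (f : G2 → M) (hf : ∀ g ∈ s, f g ∈ F) :
    ((∑ g ∈ s, g • f g, (1:G2)) : Sd M G2) ∈
      (Submonoid.closure
        ({((0:M), ofAdd ((1:ℤ),(0:ℤ))), ((0:M), ofAdd ((1:ℤ),(0:ℤ)))⁻¹,
          ((0:M), ofAdd ((0:ℤ),(1:ℤ))), ((0:M), ofAdd ((0:ℤ),(1:ℤ)))⁻¹} : Set (Sd M G2)) :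
          Set (Sd M G2)) *
      (Submonoid.closure
        ((Submonoid.closure (({((0:M), ofAdd ((1:ℤ),(0:ℤ)))} : Set (Sd M G2)) ∪
            ((fun f => ((f, (1 : G2)) : Sd M G2) * ((0:M), ofAdd ((1:ℤ),(0:ℤ)))) '' (F : Set M))) :
              Set (Sd M G2)) *
          ({((0:M), ofAdd ((0:ℤ),(1:ℤ)))} : Set (Sd M G2)) *
          (Submonoid.closure ({((0:M), ofAdd ((1:ℤ),(0:ℤ)))⁻¹} : Set (Sd M G2)) :
            Set (Sd M G2))) : Set (Sd M G2)) *
      (Submonoid.closure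
        ({((0:M), ofAdd ((1:ℤ),(0:ℤ))), ((0:M), ofAdd ((1:ℤ),(0:ℤ)))⁻¹,
          ((0:M), ofAdd ((0:ℤ),(1:ℤ))), ((0:M), ofAdd ((0:ℤ),(1:ℤ)))⁻¹} : Set (Sd M G2)) :
          Set (Sd M G2)) := by
  classical
  set B : ℕ := s.sup (fun g => max (toAdd g).1.natAbs (toAdd g).2.natAbs) with hBdef
  have hB : ∀ g ∈ s, (toAdd g).1.natAbs ≤ B ∧ (toAdd g).2.natAbs ≤ B := by
    intro g hg
    have h1 := Finset.le_sup (f := fun g : G2 => max (toAdd g).1.natAbs (toAdd g).2.natAbs) hg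
    have h2 : max (toAdd g).1.natAbs (toAdd g).2.natAbs ≤ B := h1
    omega
  set N : ℕ := 2 * B + 1 with hNdef
  set f2 : ℕ → ℕ → M := fun i j =>
    if (ofAdd ((i:ℤ) - B, (j:ℤ) - B) : G2) ∈ s then f (ofAdd ((i:ℤ) - B, (j:ℤ) - B)) else 0
    with hf2def
  have hf2 : ∀ i j, i < N → j < N → (f2 i j = 0 ∨ f2 i j ∈ F) := by
    intro i j _ _
    rw [hf2def]
    beta_reduce
    split_ifs with h
    · exact Or.inr (hf _ h)
    · exact Or.inl rfl
  have hblock := block_mem F N N f2 hf2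
  have hmemL := Set.mul_mem_mul (Set.mul_mem_mul
    (gen_mem (M := M) (ofAdd (-(B:ℤ), -(B:ℤ)))) hblock)
    (gen_mem (M := M) (ofAdd ((B:ℤ), (B:ℤ) - N)))
  have heq : (((0:M), ofAdd (-(B:ℤ), -(B:ℤ))) : Sd M G2) *
      ((∑ j ∈ Finset.range N, ∑ i ∈ Finset.range N,
        (ofAdd ((i:ℤ),(j:ℤ)) : G2) • f2 i j, ofAdd ((0:ℤ),(N:ℤ))) : Sd M G2) *
      (((0:M), ofAdd ((B:ℤ), (B:ℤ) - N)) : Sd M G2) =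
      ((∑ g ∈ s, g • f g, (1:G2)) : Sd M G2) := by
    rw [mul_def, mul_def, Prod.mk.injEq]
    constructor
    · show (0 + ofAdd (-(B:ℤ), -(B:ℤ)) • _) + _ • (0:M) = _
      rw [smul_zero, add_zero, zero_add, Finset.smul_sum]
      have hrows : ∀ j ∈ Finset.range N,
          (ofAdd (-(B:ℤ), -(B:ℤ)) : G2) • ∑ i ∈ Finset.range N,
            (ofAdd ((i:ℤ),(j:ℤ)) : G2) • f2 i j =
          ∑ i ∈ Finset.range N, (ofAdd ((i:ℤ) - B, (j:ℤ) - B) : G2) • f2 i j := by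
        intro j _
        rw [Finset.smul_sum]
        refine Finset.sum_congr rfl fun i _ => ?_
        have hmg : (ofAdd (-(B:ℤ), -(B:ℤ)) : G2) * ofAdd ((i:ℤ),(j:ℤ)) =
            ofAdd ((i:ℤ) - B, (j:ℤ) - B) := by
          rw [← ofAdd_add]
          congr 1
          show (-(B:ℤ) + (i:ℤ), -(B:ℤ) + (j:ℤ)) = ((i:ℤ) - B, (j:ℤ) - B)
          rw [Prod.mk.injEq]
          constructor <;> ring
        rw [← mul_smul, hmg]
      rw [Finset.sum_congr rfl hrows]
      -- now reindex
      rw [← Finset.sum_product']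
      have hkey : ∀ g ∈ s,
          (ofAdd (((((toAdd g).1 + (B:ℤ)).toNat : ℕ) : ℤ) - B,
            ((((toAdd g).2 + (B:ℤ)).toNat : ℕ) : ℤ) - B) : G2) = g := by
        intro g hg
        obtain ⟨u1, u2⟩ := hB g hg
        apply Multiplicative.toAdd.injective
        show ((_ : ℤ), (_ : ℤ)) = toAdd g
        rw [Prod.mk.injEq]
        constructor <;> omega
      have hιinj : ∀ a ∈ s, ∀ b ∈ s,
          (((toAdd a).2 + (B:ℤ)).toNat, ((toAdd a).1 + (B:ℤ)).toNat) =
          (((toAdd b).2 + (B:ℤ)).toNat, ((toAdd b).1 + (B:ℤ)).toNat) → a = b := by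
        intro a ha b hb h
        rw [Prod.mk.injEq] at h
        rw [← hkey a ha, ← hkey b hb, h.1, h.2]
      have hsub : s.image (fun g => (((toAdd g).2 + (B:ℤ)).toNat, ((toAdd g).1 + (B:ℤ)).toNat)) ⊆
          Finset.range N ×ˢ Finset.range N := by
        intro p hp
        rw [Finset.mem_image] at hp
        obtain ⟨g, hg, rfl⟩ := hp
        obtain ⟨u1, u2⟩ := hB g hg
        rw [Finset.mem_product, Finset.mem_range, Finset.mem_range]
        constructor <;> omega
      rw [← Finset.sum_subset hsub]
      · rw [Finset.sum_image hιinj]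
        refine Finset.sum_congr rfl fun g hg => ?_
        beta_reduce
        rw [hf2def]
        beta_reduce
        rw [hkey g hg, if_pos hg]
      · intro p hp hnp
        beta_reduce
        rw [hf2def]
        beta_reduce
        split_ifs with h
        · exfalso
          apply hnp
          rw [Finset.mem_image]
          refine ⟨ofAdd (((p.2:ℕ):ℤ) - B, ((p.1:ℕ):ℤ) - B), h, ?_⟩
          rw [Prod.mk.injEq]
          constructor
          · show ((((p.2:ℕ):ℤ) - B, ((p.1:ℕ):ℤ) - B).2 + (B:ℤ)).toNat = p.1
            show ((((p.1:ℕ):ℤ) - B) + (B:ℤ)).toNat = p.1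
            omega
          · show ((((p.2:ℕ):ℤ) - B, ((p.1:ℕ):ℤ) - B).1 + (B:ℤ)).toNat = p.2
            show ((((p.2:ℕ):ℤ) - B) + (B:ℤ)).toNat = p.2
            omega
        · rw [smul_zero]
    · show ofAdd (-(B:ℤ), -(B:ℤ)) * ofAdd ((0:ℤ),(N:ℤ)) * ofAdd ((B:ℤ), (B:ℤ) - N) = 1
      rw [← ofAdd_add, ← ofAdd_add]
      show ofAdd _ = ofAdd ((0:ℤ),(0:ℤ))
      congr 1
      show (-(B:ℤ) + 0 + B, -(B:ℤ) + (N:ℤ) + ((B:ℤ) - N)) = ((0:ℤ),(0:ℤ))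
      rw [Prod.mk.injEq]
      constructor <;> ring
  rwa [heq] at hmemL

end Stmt16Aux

/-- Let `R` be a nonzero ring, `G = ℤ × ℤ`, and `M` a free `RG`-module.  In
`M ⋊ G`, with `x = (0,(1,0))` and `y = (0,(0,1))`, let `F ⊆ M` be a finite set
of nonzero elements and let `L` be the rational subset
`{x^{±1},y^{±1}}* [(x ∪ Fx)* y (x⁻¹)*]* {x^{±1},y^{±1}}*` (Kleene star = the
generated submonoid, concatenation = pointwise product of subsets).  Then
`(m,(0,0)) ∈ L` iff `m` is a subset sum of `F`, i.e. `m = Σᵢ gᵢ • fᵢ` with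
pairwise distinct `gᵢ ∈ G` and `fᵢ ∈ F`. -/
theorem stmt16 (R : Type*) [Ring R] [Nontrivial R] (M : Type*) [AddCommGroup M]
    [Module (MonoidAlgebra R (Multiplicative (ℤ × ℤ))) M]
    [DistribMulAction (Multiplicative (ℤ × ℤ)) M]
    (hcomp : ∀ (g : Multiplicative (ℤ × ℤ)) (v : M),
      g • v = (MonoidAlgebra.of R (Multiplicative (ℤ × ℤ)) g) • v)
    (ι : Type*) (b : Module.Basis ι (MonoidAlgebra R (Multiplicative (ℤ × ℤ))) M)
    (F : Finset M) (hF : ∀ f ∈ F, f ≠ (0 : M)) (m : M) :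
    let G' := Multiplicative (ℤ × ℤ)
    let x : Sd M G' := ((0 : M), Multiplicative.ofAdd ((1 : ℤ), (0 : ℤ)))
    let y : Sd M G' := ((0 : M), Multiplicative.ofAdd ((0 : ℤ), (1 : ℤ)))
    let Gen : Set (Sd M G') := {x, x⁻¹, y, y⁻¹}
    let Fx : Set (Sd M G') := (fun f => ((f, (1 : G')) : Sd M G') * x) '' (F : Set M)
    let L : Set (Sd M G') :=
      (Submonoid.closure Gen : Set (Sd M G')) *
        (Submonoid.closure
          ((Submonoid.closure ({x} ∪ Fx) : Set (Sd M G')) * ({y} : Set (Sd M G')) *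
            (Submonoid.closure ({x⁻¹} : Set (Sd M G')) : Set (Sd M G'))) :
          Set (Sd M G')) *
        (Submonoid.closure Gen : Set (Sd M G'))
    ((m, (1 : G')) ∈ L ↔
      ∃ (n : ℕ) (g : Fin n → G'), Function.Injective g ∧
        ∃ f : Fin n → M, (∀ i, f i ∈ F) ∧ m = ∑ i, g i • f i) := by
  intro G' x y Gen Fx L
  constructor
  · intro hm
    obtain ⟨s, f, hsF, hsum⟩ := Stmt16Aux.L_forward F m hm
    obtain ⟨n, g, hginj, f', hf', hsum'⟩ := Stmt16Aux.finset_to_fin F s f hsF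
    exact ⟨n, g, hginj, f', hf', by rw [hsum, ← hsum']⟩
  · rintro ⟨n, g, hginj, f, hfF, rfl⟩
    obtain ⟨s, f', hs, hsum⟩ := Stmt16Aux.fin_to_finset F n g hginj f hfF
    have hb := Stmt16Aux.L_backward F s f' hs
    rwa [hsum] at hb
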